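/- Let G be a graph such that neither G nor its complement contains an induced wheel on at most 5 vertices. Let A and B be disjoint cliques of G, each of size at least 2, with no edges between A and B, chosen with |A ∪ B| maximum. Then every vertex x outside A ∪ B satisfies one of: (i) x is complete to A and has a neighbor in B, (ii) x is complete to B and has a neighbor in A, or (iii) x has exactly one non-neighbor in A and exactly one non-neighbor in B. -/

import Mathlib

open SimpleGraph

/-- `G` contains an induced copy of `H`. -/
def ContainsInduced {V W : Type*} (G : SimpleGraph V) (H : SimpleGraph W) : Prop :=
  ∃ f : W ↪ V, ∀ u v, G.Adj (f u) (f v) ↔ H.Adj u v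

/-- The path on 5 vertices. -/
def path5 : SimpleGraph (Fin 5) :=
  SimpleGraph.fromRel (fun i j => (i : ℕ) + 1 = (j : ℕ))

/-- Two disjoint edges. -/
def twoK2 : SimpleGraph (Fin 4) :=
  SimpleGraph.fromRel (fun i j => (i = 0 ∧ j = 1) ∨ (i = 2 ∧ j = 3))

/-- The cycle on `n` vertices (for `n ≥ 3`). -/
def cycG (n : ℕ) : SimpleGraph (Fin n) :=
  SimpleGraph.fromRel (fun i j => ((i : ℕ) + 1) % n = (j : ℕ))

/-- `G` contains an induced wheel: an induced (chordless) cycle of length at least 4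
plus a vertex with at least three neighbors on the cycle. -/
def ContainsWheel {V : Type*} (G : SimpleGraph V) : Prop :=
  ∃ n : ℕ, 4 ≤ n ∧ ∃ (f : Fin n ↪ V) (hub : V),
    (∀ i, hub ≠ f i) ∧
    (∀ i j, G.Adj (f i) (f j) ↔ (cycG n).Adj i j) ∧
    3 ≤ {i : Fin n | G.Adj hub (f i)}.ncard

/-- `G` contains an induced wheel on at most `k` vertices. -/
def ContainsWheelLE {V : Type*} (G : SimpleGraph V) (k : ℕ) : Prop :=
  ∃ n : ℕ, 4 ≤ n ∧ n + 1 ≤ k ∧ ∃ (f : Fin n ↪ V) (hub : V),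
    (∀ i, hub ≠ f i) ∧
    (∀ i j, G.Adj (f i) (f j) ↔ (cycG n).Adj i j) ∧
    3 ≤ {i : Fin n | G.Adj hub (f i)}.ncard

/-- `s` is the vertex set of a hole (induced cycle of length at least 4) of `G`. -/
def IsHoleSet {V : Type*} (G : SimpleGraph V) (s : Set V) : Prop :=
  ∃ n : ℕ, 4 ≤ n ∧ ∃ f : Fin n ↪ V, Set.range f = s ∧
    ∀ i j, G.Adj (f i) (f j) ↔ (cycG n).Adj i j

/-- `G` is a split graph: its vertex set partitions into a stable set and a clique. -/
def IsSplit {V : Type*} (G : SimpleGraph V) : Prop :=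
  ∃ S K : Set V, (∀ v, v ∈ S ∨ v ∈ K) ∧ S ∩ K = ∅ ∧
    (∀ u ∈ S, ∀ v ∈ S, ¬G.Adj u v) ∧ G.IsClique K

lemma wheel5 {V : Type*} (H : SimpleGraph V) (c0 c1 c2 c3 hub : V)
    (d02 : c0 ≠ c2) (d13 : c1 ≠ c3)
    (h0 : hub ≠ c0) (h1 : hub ≠ c1) (h2 : hub ≠ c2) (h3 : hub ≠ c3)
    (e01 : H.Adj c0 c1) (e12 : H.Adj c1 c2) (e23 : H.Adj c2 c3) (e30 : H.Adj c3 c0)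
    (n02 : ¬H.Adj c0 c2) (n13 : ¬H.Adj c1 c3)
    (a0 : H.Adj hub c0) (a1 : H.Adj hub c1) (a2 : H.Adj hub c2) :
    ContainsWheelLE H 5 := by
  have n20 : ¬H.Adj c2 c0 := fun h => n02 h.symm
  have n31 : ¬H.Adj c3 c1 := fun h => n13 h.symm
  have finj : Function.Injective (![c0, c1, c2, c3]) := by
    intro i j hij
    fin_cases i <;> fin_cases j <;> simp_all <;>
      first
      | rfl
      | exact absurd hij e01.ne
      | exact absurd hij.symm e01.ne
      | exact absurd hij e12.ne
      | exact absurd hij.symm e12.ne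
      | exact absurd hij e23.ne
      | exact absurd hij.symm e23.ne
      | exact absurd hij d02
      | exact absurd hij.symm d02
      | exact absurd hij d13
      | exact absurd hij.symm d13
  refine ⟨4, le_refl _, le_refl _, ⟨![c0,c1,c2,c3], finj⟩, hub, ?_, ?_, ?_⟩
  · intro i; fin_cases i <;> simpa
  · intro i j
    fin_cases i <;> fin_cases j <;>
      simp [cycG, SimpleGraph.fromRel_adj, Fin.ext_iff, e01, e12, e23, e30, e01.symm, e12.symm,
        e23.symm, e30.symm, n02, n13, n20, n31] <;> decide
  · have hsub : ({0, 1, 2} : Set (Fin 4)) ⊆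
        {i : Fin 4 | H.Adj hub (![c0,c1,c2,c3] i)} := by
      rintro i hi
      simp only [Set.mem_insert_iff, Set.mem_singleton_iff] at hi
      rcases hi with rfl | rfl | rfl <;> simpa
    have h3' : ({0, 1, 2} : Set (Fin 4)).ncard = 3 := by
      rw [Set.ncard_eq_three]
      exact ⟨0, 1, 2, by decide, by decide, by decide, rfl⟩
    simp only [Function.Embedding.coeFn_mk]
    calc 3 = ({0, 1, 2} : Set (Fin 4)).ncard := h3'.symm
      _ ≤ _ := Set.ncard_le_ncard hsub (Set.toFinite _)

/-- Two non-neighbors of `x` in `A` plus a neighbor and a non-neighbor of `x` in `B`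
gives a wheel in the complement. -/
lemma key {V : Type*} (G : SimpleGraph V) (A B : Set V) (hA : G.IsClique A)
    (hdisj : A ∩ B = ∅) (hanti : ∀ u ∈ A, ∀ v ∈ B, ¬G.Adj u v)
    (x : V) (hxA : x ∉ A) (hxB : x ∉ B)
    (a1 a2 : V) (ha1 : a1 ∈ A) (ha2 : a2 ∈ A) (h12 : a1 ≠ a2)
    (hn1 : ¬G.Adj x a1) (hn2 : ¬G.Adj x a2)
    (b b' : V) (hb : b ∈ B) (hb' : b' ∈ B) (hxb : G.Adj x b) (hxb' : ¬G.Adj x b') :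
    ContainsWheelLE Gᶜ 5 := by
  have hAB : ∀ u ∈ A, u ∉ B := fun u hu hu' =>
    (Set.eq_empty_iff_forall_notMem.mp hdisj u) ⟨hu, hu'⟩
  -- cycle a1 - x - a2 - b in the complement, hub b'
  refine wheel5 Gᶜ a1 x a2 b b' h12 (by rintro rfl; exact G.irrefl hxb) ?_ ?_ ?_ ?_ ?_
    ?_ ?_ ?_ ?_ ?_ ?_ ?_ ?_
  · rintro rfl; exact hAB _ ha1 hb'
  · rintro rfl; exact hxB hb'
  · rintro rfl; exact hAB _ ha2 hb'
  · rintro rfl; exact hxb' hxb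
  · exact ⟨by rintro rfl; exact hxA ha1, fun h => hn1 h.symm⟩
  · exact ⟨by rintro rfl; exact hxA ha2, hn2⟩
  · exact ⟨by rintro rfl; exact hAB _ ha2 hb, fun h => hanti a2 ha2 b hb h⟩
  · exact ⟨by rintro rfl; exact hAB _ ha1 hb, fun h => hanti a1 ha1 b hb h.symm⟩
  · intro h; exact h.2 (hA ha1 ha2 h12)
  · intro h; exact h.2 hxb
  · exact ⟨by rintro rfl; exact hAB _ ha1 hb', fun h => hanti a1 ha1 b' hb' h.symm⟩
  · exact ⟨by rintro rfl; exact hxB hb', fun h => hxb' h.symm⟩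
  · exact ⟨by rintro rfl; exact hAB _ ha2 hb', fun h => hanti a2 ha2 b' hb' h.symm⟩

/-- If `x` is outside `A ∪ B`, it has a neighbor in `A`. -/
lemma hasNbr {V : Type*} [Fintype V] (G : SimpleGraph V)
    (h2 : ¬ContainsWheelLE Gᶜ 5)
    (A B : Set V) (hA : G.IsClique A) (hB : G.IsClique B)
    (hA2 : 2 ≤ A.ncard) (hB2 : 2 ≤ B.ncard) (hdisj : A ∩ B = ∅)
    (hanti : ∀ u ∈ A, ∀ v ∈ B, ¬G.Adj u v)
    (hmax : ∀ A' B' : Set V, G.IsClique A' → G.IsClique B' →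
      2 ≤ A'.ncard → 2 ≤ B'.ncard → A' ∩ B' = ∅ →
      (∀ u ∈ A', ∀ v ∈ B', ¬G.Adj u v) → (A' ∪ B').ncard ≤ (A ∪ B).ncard)
    (x : V) (hxA : x ∉ A) (hxB : x ∉ B) : ∃ a ∈ A, G.Adj x a := by
  have hAB : ∀ u ∈ A, u ∉ B := fun u hu hu' =>
    (Set.eq_empty_iff_forall_notMem.mp hdisj u) ⟨hu, hu'⟩
  by_contra hno
  push_neg at hno
  obtain ⟨a1, a2, ha1, ha2, h12⟩ :=
    (Set.one_lt_ncard_iff (Set.toFinite A)).mp (lt_of_lt_of_le one_lt_two hA2)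
  by_cases hcomp : ∀ b ∈ B, G.Adj x b
  · -- maximality contradiction: A and insert x B
    have hclique : G.IsClique (insert x B) := hB.insert fun b hb _ => hcomp b hb
    have hd : A ∩ insert x B = ∅ := by
      ext u
      simp only [Set.mem_inter_iff, Set.mem_insert_iff, Set.mem_empty_iff_false, iff_false,
        not_and]
      rintro hu (rfl | hu')
      · exact hxA hu
      · exact hAB u hu hu'
    have hle := hmax A (insert x B) hA hclique hA2
      (le_trans hB2 (Set.ncard_le_ncard (Set.subset_insert _ _) (Set.toFinite _))) hd
      (by
        rintro u hu v (rfl | hv)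
        · exact fun h => hno u hu h.symm
        · exact hanti u hu v hv)
    have heq : A ∪ insert x B = insert x (A ∪ B) := by
      ext u; simp only [Set.mem_union, Set.mem_insert_iff]; tauto
    rw [heq, Set.ncard_insert_of_notMem (by simp [hxA, hxB]) (Set.toFinite _)] at hle
    omega
  · push_neg at hcomp
    obtain ⟨b', hb', hnb'⟩ := hcomp
    by_cases hnbr : ∃ b ∈ B, G.Adj x b
    · obtain ⟨b, hb, hxb⟩ := hnbr
      exact h2 (key G A B hA hdisj hanti x hxA hxB a1 a2 ha1 ha2 h12
        (hno a1 ha1) (hno a2 ha2) b b' hb hb' hxb hnb')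
    · push_neg at hnbr
      obtain ⟨b1, b2, hb1, hb2, hb12⟩ :=
        (Set.one_lt_ncard_iff (Set.toFinite B)).mp (lt_of_lt_of_le one_lt_two hB2)
      -- cycle a1 - b1 - a2 - b2 in complement, hub x
      refine h2 (wheel5 Gᶜ a1 b1 a2 b2 x h12 hb12 ?_ ?_ ?_ ?_ ?_ ?_ ?_ ?_ ?_ ?_ ?_ ?_ ?_)
      · rintro rfl; exact hxA ha1
      · rintro rfl; exact hxB hb1
      · rintro rfl; exact hxA ha2
      · rintro rfl; exact hxB hb2
      · exact ⟨by rintro rfl; exact hAB _ ha1 hb1, fun h => hanti a1 ha1 b1 hb1 h⟩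
      · exact ⟨by rintro rfl; exact hAB _ ha2 hb1, fun h => hanti a2 ha2 b1 hb1 h.symm⟩
      · exact ⟨by rintro rfl; exact hAB _ ha2 hb2, fun h => hanti a2 ha2 b2 hb2 h⟩
      · exact ⟨by rintro rfl; exact hAB _ ha1 hb2, fun h => hanti a1 ha1 b2 hb2 h.symm⟩
      · intro h; exact h.2 (hA ha1 ha2 h12)
      · intro h; exact h.2 (hB hb1 hb2 hb12)
      · exact ⟨by rintro rfl; exact hxA ha1, fun h => hno a1 ha1 h⟩
      · exact ⟨by rintro rfl; exact hxB hb1, fun h => hnbr b1 hb1 h⟩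
      · exact ⟨by rintro rfl; exact hxA ha2, fun h => hno a2 ha2 h⟩

theorem stmt_13 {V : Type*} [Fintype V] (G : SimpleGraph V)
    (h1 : ¬ContainsWheelLE G 5) (h2 : ¬ContainsWheelLE Gᶜ 5)
    (A B : Set V) (hA : G.IsClique A) (hB : G.IsClique B)
    (hA2 : 2 ≤ A.ncard) (hB2 : 2 ≤ B.ncard) (hdisj : A ∩ B = ∅)
    (hanti : ∀ u ∈ A, ∀ v ∈ B, ¬G.Adj u v)
    (hmax : ∀ A' B' : Set V, G.IsClique A' → G.IsClique B' →
      2 ≤ A'.ncard → 2 ≤ B'.ncard → A' ∩ B' = ∅ →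
      (∀ u ∈ A', ∀ v ∈ B', ¬G.Adj u v) → (A' ∪ B').ncard ≤ (A ∪ B).ncard) :
    ∀ x, x ∉ A ∪ B →
      ((∀ a ∈ A, G.Adj x a) ∧ (∃ b ∈ B, G.Adj x b)) ∨
      ((∀ b ∈ B, G.Adj x b) ∧ (∃ a ∈ A, G.Adj x a)) ∨
      ((∃! a, a ∈ A ∧ ¬G.Adj x a) ∧ (∃! b, b ∈ B ∧ ¬G.Adj x b)) := by
  intro x hx
  have hxA : x ∉ A := fun h => hx (Or.inl h)
  have hxB : x ∉ B := fun h => hx (Or.inr h)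
  have hdisj' : B ∩ A = ∅ := by rw [Set.inter_comm]; exact hdisj
  have hanti' : ∀ u ∈ B, ∀ v ∈ A, ¬G.Adj u v := fun u hu v hv h => hanti v hv u hu h.symm
  have hmax' : ∀ A' B' : Set V, G.IsClique A' → G.IsClique B' →
      2 ≤ A'.ncard → 2 ≤ B'.ncard → A' ∩ B' = ∅ →
      (∀ u ∈ A', ∀ v ∈ B', ¬G.Adj u v) → (A' ∪ B').ncard ≤ (B ∪ A).ncard := by
    intro A' B' h₁ h₂' h₃ h₄ h₅ h₆
    rw [Set.union_comm B A]
    exact hmax A' B' h₁ h₂' h₃ h₄ h₅ h₆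
  have hexA := hasNbr G h2 A B hA hB hA2 hB2 hdisj hanti hmax x hxA hxB
  have hexB := hasNbr G h2 B A hB hA hB2 hA2 hdisj' hanti' hmax' x hxB hxA
  by_cases hcA : ∀ a ∈ A, G.Adj x a
  · exact Or.inl ⟨hcA, hexB⟩
  push_neg at hcA
  obtain ⟨a', ha', hna'⟩ := hcA
  by_cases hcB : ∀ b ∈ B, G.Adj x b
  · exact Or.inr (Or.inl ⟨hcB, hexA⟩)
  push_neg at hcB
  obtain ⟨b', hb', hnb'⟩ := hcB
  obtain ⟨a, ha, hxa⟩ := hexA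
  obtain ⟨b, hb, hxb⟩ := hexB
  refine Or.inr (Or.inr ⟨⟨a', ⟨ha', hna'⟩, ?_⟩, ⟨b', ⟨hb', hnb'⟩, ?_⟩⟩)
  · rintro y ⟨hy, hny⟩
    by_contra hne
    exact h2 (key G A B hA hdisj hanti x hxA hxB y a' hy ha' hne hny hna' b b' hb hb' hxb hnb')
  · rintro y ⟨hy, hny⟩
    by_contra hne
    exact h2 (key G B A hB hdisj' hanti' x hxB hxA y b' hy hb' hne hny hnb' a a' ha ha' hxa hna')
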